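/- Let D be a finite set of size n, let A ⊆ D be nonempty, and let w : D → ℝ satisfy ∑_{x∈A} w(x) = n/2. Then for every subset C ⊆ D, the noise introduced by weighting is bounded as |(2/n)·∑_{x∈C∩A} w(x) − |C∩A|/|A|| ≤ (2/n)·∑_{x∈A} max(w(x) − n/(2|A|), 0). -/

import Mathlib

lemma sum_subset_abs_le {α : Type*} [DecidableEq α] (A B : Finset α) (hBA : B ⊆ A) (u : α → ℝ)
    (h0 : ∑ x ∈ A, u x = 0) :
    |∑ x ∈ B, u x| ≤ ∑ x ∈ A, max (u x) 0 := by
  rw [abs_le]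
  constructor
  · have h1 : ∑ x ∈ A \ B, u x ≤ ∑ x ∈ A \ B, max (u x) 0 :=
      Finset.sum_le_sum fun x _ => le_max_left _ _
    have h2 : ∑ x ∈ A \ B, max (u x) 0 ≤ ∑ x ∈ A, max (u x) 0 :=
      Finset.sum_le_sum_of_subset_of_nonneg (Finset.sdiff_subset)
        (fun x _ _ => le_max_right _ _)
    have h3 : ∑ x ∈ B, u x + ∑ x ∈ A \ B, u x = 0 := by
      rw [add_comm, Finset.sum_sdiff hBA]; exact h0
    linarith
  · calc ∑ x ∈ B, u x ≤ ∑ x ∈ B, max (u x) 0 :=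
          Finset.sum_le_sum fun x _ => le_max_left _ _
      _ ≤ ∑ x ∈ A, max (u x) 0 :=
          Finset.sum_le_sum_of_subset_of_nonneg hBA (fun x _ _ => le_max_right _ _)

/-- For a test set `D` of size `n`, a nonempty subset `A ⊆ D`, and weights
with `∑_{x∈A} w x = n / 2`, the noise introduced by weighting is bounded for every `C ⊆ D`:
`|(2/n)·∑_{x∈C∩A} w x − |C∩A|/|A|| ≤ (2/n)·∑_{x∈A} max (w x − n/(2|A|)) 0`. -/
theorem weighting_noise_bound {α : Type*} [DecidableEq α]
    (D A : Finset α) (hAD : A ⊆ D) (hA : A.Nonempty)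
    (n : ℕ) (hn : D.card = n) (w : α → ℝ)
    (hw : ∑ x ∈ A, w x = (n : ℝ) / 2)
    (C : Finset α) (hC : C ⊆ D) :
    |(2 / (n : ℝ)) * ∑ x ∈ C ∩ A, w x - ((C ∩ A).card : ℝ) / (A.card : ℝ)|
      ≤ (2 / (n : ℝ)) * ∑ x ∈ A, max (w x - (n : ℝ) / (2 * (A.card : ℝ))) 0 := by
  have hapos : 0 < (A.card : ℝ) := by exact_mod_cast Finset.card_pos.mpr hA
  have hnpos : 0 < (n : ℝ) := by
    have := Finset.card_le_card hAD
    rw [hn] at this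
    exact_mod_cast lt_of_lt_of_le (Finset.card_pos.mpr hA) this
  set u : α → ℝ := fun x => w x - (n : ℝ) / (2 * (A.card : ℝ)) with hu
  have h0 : ∑ x ∈ A, u x = 0 := by
    simp only [hu, Finset.sum_sub_distrib, hw, Finset.sum_const, nsmul_eq_mul]
    field_simp
    ring
  have hBA : C ∩ A ⊆ A := Finset.inter_subset_right
  have key := sum_subset_abs_le A (C ∩ A) hBA u h0
  have heq : (2 / (n : ℝ)) * ∑ x ∈ C ∩ A, w x - ((C ∩ A).card : ℝ) / (A.card : ℝ)
      = (2 / (n : ℝ)) * ∑ x ∈ C ∩ A, u x := by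
    simp only [hu, Finset.sum_sub_distrib, Finset.sum_const, nsmul_eq_mul]
    field_simp
  rw [heq, abs_mul, abs_of_pos (by positivity : (0:ℝ) < 2 / n)]
  exact mul_le_mul_of_nonneg_left key (by positivity)
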